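/- Let ε ∈ U(m) be unitary and skew-symmetric, and let α ∈ U(m). If there exists γ ∈ U(m) with α = ε⁻¹·γᵗ·ε·γ, then ε·α = αᵗ·ε. Conversely, if ε·α = αᵗ·ε, then such a γ ∈ U(m) exists; explicitly, writing α = exp(i·h) with h self-adjoint with spectrum in (-π, π], one can take γ = exp(i·h/2). -/

import Mathlib

open Matrix

noncomputable section

namespace S4

open Polynomial Complex

variable {m : ℕ}

def conjAE (U : Matrix (Fin m) (Fin m) ℂ) (hU : U ∈ Matrix.unitaryGroup (Fin m) ℂ) :
    Matrix (Fin m) (Fin m) ℂ ≃ₐ[ℂ] Matrix (Fin m) (Fin m) ℂ where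
  toFun x := U * x * star U
  invFun x := star U * x * U
  left_inv x := by
    have h1 : star U * U = 1 := Matrix.mem_unitaryGroup_iff'.mp hU
    calc star U * (U * x * star U) * U = (star U * U) * x * (star U * U) := by
          simp only [mul_assoc]
      _ = x := by rw [h1, one_mul, mul_one]
  right_inv x := by
    have h2 : U * star U = 1 := Matrix.mem_unitaryGroup_iff.mp hU
    calc U * (star U * x * U) * star U = (U * star U) * x * (U * star U) := by
          simp only [mul_assoc]
      _ = x := by rw [h2, one_mul, mul_one]
  map_mul' x y := by
    have h1 : star U * U = 1 := Matrix.mem_unitaryGroup_iff'.mp hU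
    calc U * (x * y) * star U = U * x * (star U * U) * y * star U := by
          rw [h1]; simp only [mul_assoc]; rw [one_mul]
      _ = (U * x * star U) * (U * y * star U) := by simp only [mul_assoc]
  map_add' x y := by noncomm_ring
  commutes' r := by
    have h2 : U * star U = 1 := Matrix.mem_unitaryGroup_iff.mp hU
    simp [Algebra.algebraMap_eq_smul_one, Matrix.smul_mul, Matrix.mul_smul, h2]

lemma conjAE_apply (U hU) (x : Matrix (Fin m) (Fin m) ℂ) : conjAE U hU x = U * x * star U := rfl

lemma aeval_conj_diagonal (U : Matrix (Fin m) (Fin m) ℂ) (hU : U ∈ Matrix.unitaryGroup (Fin m) ℂ)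
    (d : Fin m → ℂ) (p : ℂ[X]) :
    aeval (U * diagonal d * star U) p = U * diagonal (fun j => p.eval (d j)) * star U := by
  have e0 : U * diagonal d * star U = conjAE U hU (diagonalAlgHom ℂ d) := rfl
  have e1 : aeval d p = fun j => p.eval (d j) := by
    funext j
    exact (aeval_algHom_apply (Pi.evalAlgHom ℂ (fun _ => ℂ) j) d p).symm
  rw [e0, aeval_algHom_apply, aeval_algHom_apply, conjAE_apply, diagonalAlgHom_apply, e1]

lemma exp_conj_diagonal (U : Matrix (Fin m) (Fin m) ℂ) (hU : U ∈ Matrix.unitaryGroup (Fin m) ℂ)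
    (d : Fin m → ℂ) :
    NormedSpace.exp (U * diagonal d * star U)
      = U * diagonal (fun j => Complex.exp (d j)) * star U := by
  have hu : IsUnit U :=
    ⟨⟨U, star U, Matrix.mem_unitaryGroup_iff.mp hU, Matrix.mem_unitaryGroup_iff'.mp hU⟩, rfl⟩
  have hinv : U⁻¹ = star U := Matrix.inv_eq_right_inv (Matrix.mem_unitaryGroup_iff.mp hU)
  rw [← hinv, Matrix.exp_conj U (diagonal d) hu, Matrix.exp_diagonal]
  congr 2
  funext j
  rw [Pi.exp_def]
  exact (Complex.exp_eq_exp_ℂ ▸ rfl)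

lemma spectrum_conj_diagonal (U : Matrix (Fin m) (Fin m) ℂ)
    (hU : U ∈ Matrix.unitaryGroup (Fin m) ℂ) (d : Fin m → ℂ) :
    spectrum ℂ (U * diagonal d * star U) = Set.range d := by
  have := Unitary.spectrum_star_right_conjugate (R := ℂ) (a := diagonal d)
    (U := (⟨U, hU⟩ : unitary (Matrix (Fin m) (Fin m) ℂ)))
  rw [this, spectrum_diagonal]


lemma smul_conj_diagonal (c : ℂ) (U : Matrix (Fin m) (Fin m) ℂ) (d : Fin m → ℂ) :
    c • (U * diagonal d * star U) = U * diagonal (fun j => c * d j) * star U := by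
  have : diagonal (fun j => c * d j) = c • diagonal d := by
    rw [← Matrix.diagonal_smul]
    congr 1
  rw [this, Matrix.mul_smul, Matrix.smul_mul]

lemma herm_decomp (A : Matrix (Fin m) (Fin m) ℂ) (hA : A.IsHermitian) :
    ∃ U, U ∈ Matrix.unitaryGroup (Fin m) ℂ ∧ ∃ a : Fin m → ℝ,
      A = U * diagonal (fun j => (a j : ℂ)) * star U :=
  ⟨_, (Matrix.IsHermitian.eigenvectorUnitary hA).2, hA.eigenvalues, hA.spectral_theorem⟩

lemma herm_exp_inj {A B : Matrix (Fin m) (Fin m) ℂ} (hA : A.IsHermitian) (hB : B.IsHermitian)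
    (sA : ∀ μ ∈ spectrum ℂ A, μ.re ∈ Set.Ioc (-Real.pi) Real.pi)
    (sB : ∀ μ ∈ spectrum ℂ B, μ.re ∈ Set.Ioc (-Real.pi) Real.pi)
    (hexp : NormedSpace.exp (Complex.I • A) = NormedSpace.exp (Complex.I • B)) : A = B := by
  obtain ⟨U, hU, a, hAe⟩ := herm_decomp A hA
  obtain ⟨V, hV, b, hBe⟩ := herm_decomp B hB
  have haI : ∀ j, a j ∈ Set.Ioc (-Real.pi) Real.pi := by
    intro j
    have hj : ((a j : ℂ)) ∈ spectrum ℂ A := by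
      rw [hAe, spectrum_conj_diagonal U hU]; exact ⟨j, rfl⟩
    simpa using sA _ hj
  have hbI : ∀ j, b j ∈ Set.Ioc (-Real.pi) Real.pi := by
    intro j
    have hj : ((b j : ℂ)) ∈ spectrum ℂ B := by
      rw [hBe, spectrum_conj_diagonal V hV]; exact ⟨j, rfl⟩
    simpa using sB _ hj
  set S : Finset ℂ := (Finset.univ.image fun j => Complex.exp (Complex.I * a j)) ∪
      (Finset.univ.image fun j => Complex.exp (Complex.I * b j)) with hS
  set p : ℂ[X] := Lagrange.interpolate S id (fun z => -Complex.I * Complex.log z) with hp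
  have keyval : ∀ θ : ℝ, θ ∈ Set.Ioc (-Real.pi) Real.pi →
      Complex.exp (Complex.I * θ) ∈ S → p.eval (Complex.exp (Complex.I * θ)) = (θ : ℂ) := by
    intro θ hθ hmem
    have hnode := Lagrange.eval_interpolate_at_node (v := id) (s := S)
      (r := fun z => -Complex.I * Complex.log z) Function.injective_id.injOn hmem
    simp only [id] at hnode
    rw [hp, hnode]
    have him : (Complex.I * (θ : ℂ)).im = θ := by simp
    rw [Complex.log_exp (by rw [him]; exact hθ.1) (by rw [him]; exact hθ.2)]
    rw [← mul_assoc, neg_mul, Complex.I_mul_I, neg_neg, one_mul]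
  have expA : NormedSpace.exp (Complex.I • A)
      = U * diagonal (fun j => Complex.exp (Complex.I * a j)) * star U := by
    rw [hAe, smul_conj_diagonal, exp_conj_diagonal U hU]
  have expB : NormedSpace.exp (Complex.I • B)
      = V * diagonal (fun j => Complex.exp (Complex.I * b j)) * star V := by
    rw [hBe, smul_conj_diagonal, exp_conj_diagonal V hV]
  have evA : aeval (NormedSpace.exp (Complex.I • A)) p = A := by
    rw [expA, aeval_conj_diagonal U hU, hAe]
    have e : (fun j => eval (Complex.exp (Complex.I * a j)) p) = fun j => ((a j : ℂ)) :=
      funext fun j => keyval (a j) (haI j)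
        (Finset.mem_union_left _ (Finset.mem_image_of_mem _ (Finset.mem_univ j)))
    rw [e]
  have evB : aeval (NormedSpace.exp (Complex.I • B)) p = B := by
    rw [expB, aeval_conj_diagonal V hV, hBe]
    have e : (fun j => eval (Complex.exp (Complex.I * b j)) p) = fun j => ((b j : ℂ)) :=
      funext fun j => keyval (b j) (hbI j)
        (Finset.mem_union_right _ (Finset.mem_image_of_mem _ (Finset.mem_univ j)))
    rw [e]
  calc A = aeval (NormedSpace.exp (Complex.I • A)) p := evA.symm
    _ = aeval (NormedSpace.exp (Complex.I • B)) p := by rw [hexp]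
    _ = B := evB


lemma conj_mul_conj (U : Matrix (Fin m) (Fin m) ℂ) (hU : U ∈ Matrix.unitaryGroup (Fin m) ℂ)
    (X Y : Matrix (Fin m) (Fin m) ℂ) :
    (U * X * star U) * (U * Y * star U) = U * (X * Y) * star U := by
  have h1 : star U * U = 1 := Matrix.mem_unitaryGroup_iff'.mp hU
  calc (U * X * star U) * (U * Y * star U) = U * X * (star U * U) * Y * star U := by
        simp only [mul_assoc]
    _ = U * (X * Y) * star U := by rw [h1]; simp only [mul_assoc]; rw [one_mul]

lemma conj_add (U X Y : Matrix (Fin m) (Fin m) ℂ) :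
    (U * X * star U) + (U * Y * star U) = U * (X + Y) * star U := by
  rw [← add_mul, ← mul_add]

lemma conj_sub (U X Y : Matrix (Fin m) (Fin m) ℂ) :
    (U * X * star U) - (U * Y * star U) = U * (X - Y) * star U := by
  rw [← sub_mul, ← mul_sub]

lemma smul_one_conj (c : ℂ) (U : Matrix (Fin m) (Fin m) ℂ)
    (hU : U ∈ Matrix.unitaryGroup (Fin m) ℂ) :
    c • (1 : Matrix (Fin m) (Fin m) ℂ) = U * diagonal (fun _ => c) * star U := by
  have h2 : U * star U = 1 := Matrix.mem_unitaryGroup_iff.mp hU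
  have : diagonal (fun _ : Fin m => c) = c • (1 : Matrix (Fin m) (Fin m) ℂ) := by
    funext i k
    by_cases hik : i = k <;>
      simp [Matrix.diagonal_apply, Matrix.one_apply, hik]
  rw [this, Matrix.mul_smul, Matrix.smul_mul, mul_one, h2]

lemma herm_conj_real_diag (U : Matrix (Fin m) (Fin m) ℂ)
    (hU : U ∈ Matrix.unitaryGroup (Fin m) ℂ) (r : Fin m → ℝ) :
    (U * diagonal (fun j => (r j : ℂ)) * star U).IsHermitian := by
  have hD : star (diagonal (fun j => ((r j : ℝ) : ℂ))) = diagonal (fun j => ((r j : ℝ) : ℂ)) :=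
    Matrix.isHermitian_diagonal_of_self_adjoint _
      (by funext j; simp [Pi.star_apply, Complex.conj_ofReal] : IsSelfAdjoint (fun j => ((r j : ℝ) : ℂ)))
  show _ᴴ = _
  rw [← Matrix.star_eq_conjTranspose, Matrix.star_mul, Matrix.star_mul, star_star, hD, mul_assoc]

lemma exists_good_c (α : Matrix (Fin m) (Fin m) ℂ) :
    ∃ c : ℂ, ‖c‖ = 1 ∧ IsUnit (c • (1 : Matrix (Fin m) (Fin m) ℂ) + α) := by
  have hfin := Matrix.finite_spectrum (R := ℂ) α
  have hπ : (3:ℝ) < Real.pi := Real.pi_gt_three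
  have hinj : Set.InjOn (fun θ : ℝ => -Complex.exp (Complex.I * θ)) (Set.Ioo 0 1) := by
    intro x hx y hy hxy
    simp only [neg_inj] at hxy
    have hx' : Complex.log (Complex.exp (Complex.I * x)) = Complex.I * x :=
      Complex.log_exp (by simp; linarith [hx.1]) (by simp; linarith [hx.2])
    have hy' : Complex.log (Complex.exp (Complex.I * y)) = Complex.I * y :=
      Complex.log_exp (by simp; linarith [hy.1]) (by simp; linarith [hy.2])
    have : Complex.I * x = Complex.I * y := by rw [← hx', ← hy', hxy]
    have := congrArg Complex.im this
    simpa using this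
  have hIoo : (Set.Ioo (0:ℝ) 1).Infinite := Set.Ioo_infinite (by norm_num)
  have hns : ¬ ((fun θ : ℝ => -Complex.exp (Complex.I * θ)) '' (Set.Ioo 0 1) ⊆ spectrum ℂ α) := by
    intro hsub
    exact ((hIoo.image hinj).mono hsub) hfin
  obtain ⟨z, ⟨θ, hθ, rfl⟩, hz⟩ := Set.not_subset.mp hns
  refine ⟨Complex.exp (Complex.I * θ), by simp [Complex.norm_exp], ?_⟩
  have hu := spectrum.notMem_iff.mp hz
  have heq : (algebraMap ℂ (Matrix (Fin m) (Fin m) ℂ)) (-Complex.exp (Complex.I * θ)) - α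
      = -(Complex.exp (Complex.I * θ) • (1 : Matrix (Fin m) (Fin m) ℂ) + α) := by
    rw [Algebra.algebraMap_eq_smul_one, neg_smul, neg_add, ← sub_eq_add_neg]
  rw [heq] at hu
  simpa using hu.neg

lemma exists_herm_log (α : Matrix (Fin m) (Fin m) ℂ) (hα : α ∈ Matrix.unitaryGroup (Fin m) ℂ) :
    ∃ h : Matrix (Fin m) (Fin m) ℂ, h.IsHermitian ∧
      (∀ μ ∈ spectrum ℂ h, μ.re ∈ Set.Ioc (-Real.pi) Real.pi) ∧
      α = NormedSpace.exp (Complex.I • h) := by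
  obtain ⟨c, hc1, hcu⟩ := exists_good_c α
  have hc0 : c ≠ 0 := by
    intro h; rw [h] at hc1; simp at hc1
  set β : Matrix (Fin m) (Fin m) ℂ := c⁻¹ • α with hβ
  have habsinv : ‖c⁻¹‖ = 1 := by rw [norm_inv, hc1, inv_one]
  have hccc : (starRingEnd ℂ) c⁻¹ * c⁻¹ = 1 := by
    rw [← Complex.normSq_eq_conj_mul_self, Complex.normSq_eq_norm_sq, habsinv]; norm_num
  have hsβ : star β * β = 1 := by
    rw [hβ, star_smul, Matrix.smul_mul, Matrix.mul_smul, Matrix.mem_unitaryGroup_iff'.mp hα,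
      smul_smul]
    rw [show (star c⁻¹ : ℂ) = (starRingEnd ℂ) c⁻¹ from rfl, hccc, one_smul]
  have hβs : β * star β = 1 := by
    rw [hβ, star_smul, Matrix.smul_mul, Matrix.mul_smul, Matrix.mem_unitaryGroup_iff.mp hα,
      smul_smul]
    rw [show (star c⁻¹ : ℂ) = (starRingEnd ℂ) c⁻¹ from rfl, mul_comm, hccc, one_smul]
  set N : Matrix (Fin m) (Fin m) ℂ := 1 + β with hN
  have hNeq : N = c⁻¹ • (c • (1 : Matrix (Fin m) (Fin m) ℂ) + α) := by
    rw [smul_add, smul_smul, inv_mul_cancel₀ hc0, one_smul]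
  have hNu : IsUnit N := by
    rw [hNeq]
    have h1 : IsUnit (c⁻¹ • (1 : Matrix (Fin m) (Fin m) ℂ)) := by
      rw [← Algebra.algebraMap_eq_smul_one]
      exact (algebraMap ℂ (Matrix (Fin m) (Fin m) ℂ)).isUnit_map (hc0.isUnit.inv)
    have : c⁻¹ • (c • (1 : Matrix (Fin m) (Fin m) ℂ) + α)
        = (c⁻¹ • (1 : Matrix (Fin m) (Fin m) ℂ)) * (c • (1 : Matrix (Fin m) (Fin m) ℂ) + α) := by
      rw [Matrix.smul_mul, one_mul]
    rw [this]
    exact h1.mul hcu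
  have hNdet : IsUnit N.det := (Matrix.isUnit_iff_isUnit_det N).mp hNu
  have hcomm : (1 - β) * N = N * (1 - β) := by rw [hN]; noncomm_ring
  have hcommInv : (1 - β) * N⁻¹ = N⁻¹ * (1 - β) := by
    have e1 : N * ((1 - β) * N⁻¹) = (1 - β) := by
      rw [← mul_assoc, ← hcomm, mul_assoc, Matrix.mul_nonsing_inv N hNdet, mul_one]
    calc (1 - β) * N⁻¹ = (N⁻¹ * N) * ((1 - β) * N⁻¹) := by
          rw [Matrix.nonsing_inv_mul N hNdet, one_mul]
      _ = N⁻¹ * (N * ((1 - β) * N⁻¹)) := by simp only [mul_assoc]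
      _ = N⁻¹ * (1 - β) := by rw [e1]
  set A : Matrix (Fin m) (Fin m) ℂ := Complex.I • ((1 - β) * N⁻¹) with hA
  have hkey : (1 + star β)⁻¹ * (1 - star β) = -((1 - β) * N⁻¹) := by
    have e1 : 1 + star β = star β * N := by
      rw [hN, mul_add, mul_one, hsβ, add_comm]
    have e2 : (star β)⁻¹ = β := Matrix.inv_eq_right_inv hsβ
    rw [e1, Matrix.mul_inv_rev, e2, mul_assoc, mul_sub, mul_one, hβs, ← neg_sub (1 : Matrix (Fin m) (Fin m) ℂ) β,
      mul_neg, hcommInv]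
  have hAherm : A.IsHermitian := by
    show Aᴴ = A
    rw [← Matrix.star_eq_conjTranspose]
    have e3 : star A = (-Complex.I) • (star N⁻¹ * star (1 - β)) := by
      rw [hA, star_smul, Matrix.star_mul]
      congr 1
      simp [Complex.star_def]
    have e4 : star N⁻¹ = (1 + star β)⁻¹ := by
      rw [Matrix.star_eq_conjTranspose, Matrix.conjTranspose_nonsing_inv]
      congr 1
      rw [hN, ← Matrix.star_eq_conjTranspose, star_add, star_one]
    have e5 : star (1 - β) = 1 - star β := by rw [star_sub, star_one]
    rw [e3, e4, e5, hkey, smul_neg, neg_smul, neg_neg, hA]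
  obtain ⟨U, hU, d, hAe⟩ := herm_decomp A hAherm
  have hU2 : U * star U = 1 := Matrix.mem_unitaryGroup_iff.mp hU
  set P : Matrix (Fin m) (Fin m) ℂ := A + Complex.I • 1 with hP
  have hPe : P = U * diagonal (fun j => (d j : ℂ) + Complex.I) * star U := by
    rw [hP, hAe, smul_one_conj Complex.I U hU, conj_add]
    congr 2
    funext j
    simp [Matrix.diagonal_apply]
  have hPe' : P = U * diagonal (fun j => (d j : ℂ) + Complex.I) * star U := hPe
  have hdI : ∀ j, ((d j : ℂ) + Complex.I) ≠ 0 := by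
    intro j hj
    have := congrArg Complex.im hj
    simp at this
  have hPQ : P * (U * diagonal (fun j => ((d j : ℂ) + Complex.I)⁻¹) * star U) = 1 := by
    rw [hPe, conj_mul_conj U hU, diagonal_mul_diagonal]
    have e7 : (fun j => ((d j : ℂ) + Complex.I) * ((d j : ℂ) + Complex.I)⁻¹)
        = fun _ : Fin m => (1 : ℂ) := funext fun j => mul_inv_cancel₀ (hdI j)
    rw [e7, Matrix.diagonal_one, mul_one, hU2]
  have hPinv : P⁻¹ = U * diagonal (fun j => ((d j : ℂ) + Complex.I)⁻¹) * star U :=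
    Matrix.inv_eq_right_inv hPQ
  have hPdet : IsUnit P.det :=
    IsUnit.of_mul_eq_one _ (by rw [← Matrix.det_mul, hPQ, Matrix.det_one])
  have hAN : A * N = Complex.I • (1 - β) := by
    rw [hA, Matrix.smul_mul, mul_assoc, Matrix.nonsing_inv_mul N hNdet, mul_one]
  have h1 : A * β = Complex.I • 1 - Complex.I • β - A := by
    have e : A + A * β = Complex.I • 1 - Complex.I • β := by
      have := hAN
      rw [hN, mul_add, mul_one, smul_sub] at this
      exact this
    rw [← e]
    abel
  have hPβ : P * β = Complex.I • 1 - A := by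
    rw [hP, add_mul, h1, Matrix.smul_mul, one_mul]
    abel
  have hβe : β = U * diagonal
      (fun j => ((d j : ℂ) + Complex.I)⁻¹ * (Complex.I - (d j : ℂ))) * star U := by
    have : β = P⁻¹ * (Complex.I • 1 - A) := by
      rw [← hPβ, ← mul_assoc, Matrix.nonsing_inv_mul P hPdet, one_mul]
    rw [this, hPinv]
    have e6 : Complex.I • (1 : Matrix (Fin m) (Fin m) ℂ) - A
        = U * diagonal (fun j => Complex.I - (d j : ℂ)) * star U := by
      rw [hAe, smul_one_conj Complex.I U hU, conj_sub]
      congr 2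
      funext j
      simp [Matrix.diagonal_apply]
    rw [e6, conj_mul_conj U hU, diagonal_mul_diagonal]
  have hαe : α = U * diagonal
      (fun j => c * (((d j : ℂ) + Complex.I)⁻¹ * (Complex.I - (d j : ℂ)))) * star U := by
    have : α = c • β := by rw [hβ, smul_smul, mul_inv_cancel₀ hc0, one_smul]
    rw [this, hβe, smul_conj_diagonal]
  set z : Fin m → ℂ := fun j => c * (((d j : ℂ) + Complex.I)⁻¹ * (Complex.I - (d j : ℂ)))
    with hz
  have habsz : ∀ j, ‖z j‖ = 1 := by
    intro j
    have habs2 : ‖Complex.I - (d j : ℂ)‖ = ‖(d j : ℂ) + Complex.I‖ := by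
      rw [Complex.norm_def, Complex.norm_def]
      congr 1
      simp only [Complex.normSq_apply, Complex.sub_re, Complex.sub_im, Complex.add_re,
        Complex.add_im, Complex.I_re, Complex.I_im, Complex.ofReal_re, Complex.ofReal_im]
      ring
    have hzj : z j = c * (((d j : ℂ) + Complex.I)⁻¹ * (Complex.I - (d j : ℂ))) := rfl
    rw [hzj, norm_mul, norm_mul, norm_inv, hc1, habs2, one_mul,
      inv_mul_cancel₀ (norm_ne_zero_iff.mpr (hdI j))]
  refine ⟨U * diagonal (fun j => ((z j).arg : ℂ)) * star U,
    herm_conj_real_diag U hU _, ?_, ?_⟩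
  · intro μ hμ
    rw [spectrum_conj_diagonal U hU] at hμ
    obtain ⟨j, rfl⟩ := hμ
    simpa using (z j).arg_mem_Ioc
  · rw [smul_conj_diagonal, exp_conj_diagonal U hU, hαe]
    have e : (fun j => Complex.exp (Complex.I * ((z j).arg : ℂ))) = z := by
      funext j
      have h2 := Complex.norm_mul_exp_arg_mul_I (z j)
      rw [habsz j] at h2
      rw [mul_comm]
      simpa using h2
    rw [e]


lemma spectrum_transpose (M : Matrix (Fin m) (Fin m) ℂ) :
    spectrum ℂ Mᵀ = spectrum ℂ M := by
  ext μ
  rw [spectrum.mem_iff, spectrum.mem_iff]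
  have e : (algebraMap ℂ (Matrix (Fin m) (Fin m) ℂ)) μ - Mᵀ
      = (((algebraMap ℂ (Matrix (Fin m) (Fin m) ℂ)) μ) - M)ᵀ := by
    rw [Algebra.algebraMap_eq_smul_one, Matrix.transpose_sub, Matrix.transpose_smul,
      Matrix.transpose_one]
  rw [e, Matrix.isUnit_iff_isUnit_det, Matrix.det_transpose, ← Matrix.isUnit_iff_isUnit_det]

lemma exp_skew_unitary (M : Matrix (Fin m) (Fin m) ℂ) (hM : star M = -M) :
    NormedSpace.exp M ∈ Matrix.unitaryGroup (Fin m) ℂ := by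
  rw [Matrix.mem_unitaryGroup_iff]
  have hstar : star (NormedSpace.exp M) = NormedSpace.exp (-M) := by
    rw [← hM, Matrix.star_eq_conjTranspose, ← Matrix.exp_conjTranspose,
      ← Matrix.star_eq_conjTranspose]
  rw [hstar, ← Matrix.exp_add_of_commute M (-M) (Commute.refl M).neg_right, add_neg_cancel,
    NormedSpace.exp_zero]

lemma unitary_isUnit {M : Matrix (Fin m) (Fin m) ℂ} (hM : M ∈ Matrix.unitaryGroup (Fin m) ℂ) :
    IsUnit M :=
  ⟨⟨M, star M, Matrix.mem_unitaryGroup_iff.mp hM, Matrix.mem_unitaryGroup_iff'.mp hM⟩, rfl⟩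

lemma constr (ε α : Matrix (Fin m) (Fin m) ℂ) (hε : ε ∈ Matrix.unitaryGroup (Fin m) ℂ)
    (h : Matrix (Fin m) (Fin m) ℂ) (hherm : h.IsHermitian)
    (hspec : ∀ μ ∈ spectrum ℂ h, μ.re ∈ Set.Ioc (-Real.pi) Real.pi)
    (hαh : α = NormedSpace.exp (Complex.I • h))
    (hcomm : ε * α = αᵀ * ε) :
    NormedSpace.exp ((Complex.I / 2) • h) ∈ Matrix.unitaryGroup (Fin m) ℂ ∧
      α = ε⁻¹ * (NormedSpace.exp ((Complex.I / 2) • h))ᵀ * ε *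
        NormedSpace.exp ((Complex.I / 2) • h) := by
  have hεu : IsUnit ε := unitary_isUnit hε
  have hεdet : IsUnit ε.det := (Matrix.isUnit_iff_isUnit_det ε).mp hεu
  have hεinv : ε⁻¹ = star ε := Matrix.inv_eq_right_inv (Matrix.mem_unitaryGroup_iff.mp hε)
  have hhstar : star h = h := (Matrix.star_eq_conjTranspose h).trans hherm
  -- transpose of α
  have hexpT : NormedSpace.exp (Complex.I • hᵀ) = αᵀ := by
    rw [hαh, ← Matrix.transpose_smul, Matrix.exp_transpose]
  have hconj : ε * α * ε⁻¹ = αᵀ := by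
    rw [hcomm, mul_assoc, Matrix.mul_nonsing_inv ε hεdet, mul_one]
  have hexpC : NormedSpace.exp (Complex.I • (ε * h * ε⁻¹)) = αᵀ := by
    have e : Complex.I • (ε * h * ε⁻¹) = ε * (Complex.I • h) * ε⁻¹ := by
      rw [Matrix.mul_smul, Matrix.smul_mul]
    rw [e, Matrix.exp_conj ε (Complex.I • h) hεu, ← hαh, hconj]
  have hconjherm : (ε * h * ε⁻¹).IsHermitian := by
    show _ᴴ = _
    rw [hεinv, ← Matrix.star_eq_conjTranspose, Matrix.star_mul, Matrix.star_mul, star_star,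
      hhstar, mul_assoc]
  have hT : hᵀ = ε * h * ε⁻¹ := by
    apply herm_exp_inj hherm.transpose hconjherm
    · intro μ hμ
      exact hspec μ (by rwa [spectrum_transpose] at hμ)
    · intro μ hμ
      apply hspec μ
      rwa [hεinv, Unitary.spectrum_star_right_conjugate (R := ℂ) (a := h)
        (U := (⟨ε, hε⟩ : unitary (Matrix (Fin m) (Fin m) ℂ)))] at hμ
    · rw [hexpT, hexpC]
  set γ : Matrix (Fin m) (Fin m) ℂ := NormedSpace.exp ((Complex.I / 2) • h) with hγ
  have hγu : γ ∈ Matrix.unitaryGroup (Fin m) ℂ := by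
    apply exp_skew_unitary
    rw [star_smul, hhstar, ← neg_smul]
    congr 1
    simp [Complex.ext_iff]
    norm_num
  have hγT : γᵀ = ε * γ * ε⁻¹ := by
    rw [hγ, ← Matrix.exp_transpose, Matrix.transpose_smul, hT]
    have e : (Complex.I / 2) • (ε * h * ε⁻¹) = ε * ((Complex.I / 2) • h) * ε⁻¹ := by
      rw [Matrix.mul_smul, Matrix.smul_mul]
    rw [e, Matrix.exp_conj ε ((Complex.I / 2) • h) hεu]
  have hγγ : γ * γ = α := by
    rw [hγ, ← Matrix.exp_add_of_commute _ _ (Commute.refl _), ← add_smul, hαh]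
    norm_num
  refine ⟨hγu, ?_⟩
  calc α = γ * γ := hγγ.symm
    _ = ε⁻¹ * (ε * γ * ε⁻¹) * ε * γ := by
        simp only [← mul_assoc]
        rw [Matrix.nonsing_inv_mul ε hεdet, one_mul, mul_assoc γ ε⁻¹ ε,
          Matrix.nonsing_inv_mul ε hεdet, mul_one]
    _ = ε⁻¹ * γᵀ * ε * γ := by rw [← hγT]

lemma forward (ε α γ : Matrix (Fin m) (Fin m) ℂ) (hε : ε ∈ Matrix.unitaryGroup (Fin m) ℂ)
    (hskew : εᵀ = -ε) (hαγ : α = ε⁻¹ * γᵀ * ε * γ) : ε * α = αᵀ * ε := by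
  have hεu : IsUnit ε := unitary_isUnit hε
  have hεdet : IsUnit ε.det := (Matrix.isUnit_iff_isUnit_det ε).mp hεu
  have hinv : (-ε)⁻¹ = -ε⁻¹ := by
    apply Matrix.inv_eq_right_inv
    rw [Matrix.neg_mul, Matrix.mul_neg, neg_neg, Matrix.mul_nonsing_inv ε hεdet]
  rw [hαγ]
  have lhs : ε * (ε⁻¹ * γᵀ * ε * γ) = γᵀ * ε * γ := by
    simp only [← mul_assoc]
    rw [Matrix.mul_nonsing_inv ε hεdet, one_mul]
  have rhs : (ε⁻¹ * γᵀ * ε * γ)ᵀ * ε = γᵀ * ε * γ := by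
    rw [Matrix.transpose_mul, Matrix.transpose_mul, Matrix.transpose_mul,
      Matrix.transpose_transpose, Matrix.transpose_nonsing_inv, hskew, hinv]
    simp only [Matrix.neg_mul, Matrix.mul_neg, neg_neg, ← mul_assoc]
    rw [mul_assoc, Matrix.nonsing_inv_mul ε hεdet, mul_one]
  rw [lhs, rhs]


end S4

end

/-- for `ε ∈ U(m)` skew-symmetric and `α ∈ U(m)`, there is `γ ∈ U(m)`
with `α = ε⁻¹·γᵀ·ε·γ` iff `ε·α = αᵀ·ε`; explicitly, writing `α = exp(i h)` with `h`
self-adjoint with spectrum in `(-π, π]`, one can take `γ = exp(i h / 2)`. -/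
theorem statement4 {m : ℕ} (ε α : Matrix (Fin m) (Fin m) ℂ)
    (hε : ε ∈ Matrix.unitaryGroup (Fin m) ℂ)
    (hskew : εᵀ = -ε)
    (hα : α ∈ Matrix.unitaryGroup (Fin m) ℂ) :
    ((∃ γ ∈ Matrix.unitaryGroup (Fin m) ℂ, α = ε⁻¹ * γᵀ * ε * γ) ↔
      ε * α = αᵀ * ε) ∧
    (∀ h : Matrix (Fin m) (Fin m) ℂ, h.IsHermitian →
      (∀ μ ∈ spectrum ℂ h, μ.re ∈ Set.Ioc (-Real.pi) Real.pi) →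
      α = NormedSpace.exp (Complex.I • h) →
      ε * α = αᵀ * ε →
      NormedSpace.exp ((Complex.I / 2) • h) ∈ Matrix.unitaryGroup (Fin m) ℂ ∧
      α = ε⁻¹ * (NormedSpace.exp ((Complex.I / 2) • h))ᵀ * ε *
            NormedSpace.exp ((Complex.I / 2) • h)) := by
  constructor
  · constructor
    · rintro ⟨γ, hγU, hαγ⟩
      exact S4.forward ε α γ hε hskew hαγ
    · intro hc
      obtain ⟨h, hherm, hspec, hαh⟩ := S4.exists_herm_log α hα
      obtain ⟨hu, heq⟩ := S4.constr ε α hε h hherm hspec hαh hc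
      exact ⟨_, hu, heq⟩
  · intro h hherm hspec hαh hc
    exact S4.constr ε α hε h hherm hspec hαh hc
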